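/- For the hydrodynamic system u^i_t = (η_{nj} u^j u^i + α^{ij} η_{jk} u^k)_x with A^i_k(u) = η_{nj}u^j δ^i_k + u^i η_{nk} + α^{ir}η_{rk} (η symmetric, α symmetric), the Haantjes tensor of the matrix field A vanishes identically. -/
import Mathlib


open Finset

namespace HydroHaantjes

variable (n : ℕ) (hn : 0 < n)

/-- The last index `n` (0-indexed: `n-1`). -/
noncomputable def lastIdx : Fin n := ⟨n - 1, Nat.sub_lt hn Nat.one_pos⟩

/-- The (1,1)-tensor field `A^i_k(u) = η_{nj}u^j δ^i_k + u^i η_{nk} + α^{ir}η_{rk}`. -/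
noncomputable def Amat (η α : Matrix (Fin n) (Fin n) ℂ) (u : Fin n → ℂ) (i k : Fin n) : ℂ :=
  (∑ j : Fin n, η (lastIdx n hn) j * u j) * (if i = k then 1 else 0)
    + u i * η (lastIdx n hn) k
    + ∑ r : Fin n, α i r * η r k

/-- The partial derivative `∂_r A^i_k` of `Amat` (which is affine in `u`):
`∂_r A^i_k = η_{nr} δ^i_k + δ^i_r η_{nk}`. -/
noncomputable def DAmat (η : Matrix (Fin n) (Fin n) ℂ) (r i k : Fin n) : ℂ :=
  η (lastIdx n hn) r * (if i = k then 1 else 0)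
    + (if i = r then 1 else 0) * η (lastIdx n hn) k

/-- The Nijenhuis tensor
`N^i_{jk} = A^r_j ∂_r A^i_k - A^r_k ∂_r A^i_j - A^i_r (∂_j A^r_k - ∂_k A^r_j)`. -/
noncomputable def Nij (η α : Matrix (Fin n) (Fin n) ℂ) (u : Fin n → ℂ) (i j k : Fin n) : ℂ :=
  (∑ r : Fin n, Amat n hn η α u r j * DAmat n hn η r i k)
    - (∑ r : Fin n, Amat n hn η α u r k * DAmat n hn η r i j)
    - ∑ r : Fin n, Amat n hn η α u i r *
        (DAmat n hn η j r k - DAmat n hn η k r j)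

/-- The Haantjes tensor
`H^i_{jk} = N^i_{rs}A^r_j A^s_k - N^r_{js}A^i_r A^s_k - N^r_{sk}A^i_r A^s_j + N^r_{jk}A^i_s A^s_r`. -/
noncomputable def Haantjes (η α : Matrix (Fin n) (Fin n) ℂ) (u : Fin n → ℂ) (i j k : Fin n) : ℂ :=
  (∑ r : Fin n, ∑ s : Fin n,
      Nij n hn η α u i r s * Amat n hn η α u r j * Amat n hn η α u s k)
    - (∑ r : Fin n, ∑ s : Fin n,
      Nij n hn η α u r j s * Amat n hn η α u i r * Amat n hn η α u s k)
    - (∑ r : Fin n, ∑ s : Fin n,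
      Nij n hn η α u r s k * Amat n hn η α u i r * Amat n hn η α u s j)
    + ∑ r : Fin n, ∑ s : Fin n,
      Nij n hn η α u r j k * Amat n hn η α u i s * Amat n hn η α u s r

end HydroHaantjes
namespace HaantjesAux

open Finset

variable {n : ℕ}

/-- Abstract `N` tensor: `N^i_{jk} = g_j δ^i_k - g_k δ^i_j + A^i_j e_k - A^i_k e_j`
with `g = e · A`. -/
noncomputable def Nab (A : Fin n → Fin n → ℂ) (e : Fin n → ℂ) (i j k : Fin n) : ℂ :=
  (∑ r, e r * A r j) * (if i = k then 1 else 0)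
    - (∑ r, e r * A r k) * (if i = j then 1 else 0)
    + A i j * e k - A i k * e j

noncomputable def g2 (A : Fin n → Fin n → ℂ) (e : Fin n → ℂ) (j : Fin n) : ℂ :=
  ∑ r, e r * A r j
noncomputable def A2 (A : Fin n → Fin n → ℂ) (i k : Fin n) : ℂ := ∑ r, A i r * A r k
noncomputable def A3 (A : Fin n → Fin n → ℂ) (i k : Fin n) : ℂ := ∑ r, A i r * A2 A r k
noncomputable def gA (A : Fin n → Fin n → ℂ) (e : Fin n → ℂ) (j : Fin n) : ℂ :=
  ∑ r, g2 A e r * A r j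

lemma factor (f g : Fin n → ℂ) :
    ∑ r, ∑ s, f r * g s = (∑ r, f r) * (∑ s, g s) := by
  rw [Finset.sum_mul_sum]

lemma diag (h : Fin n → Fin n → ℂ) :
    ∑ r, ∑ s, (if r = s then (1:ℂ) else 0) * h r s = ∑ r, h r r := by
  simp

lemma collapseOuter (h : Fin n → Fin n → ℂ) (k : Fin n) :
    ∑ r, ∑ s, (if r = k then (1:ℂ) else 0) * h r s = ∑ s, h k s := by
  simp [← Finset.mul_sum]

lemma collapseIn (f : Fin n → ℂ) (j : Fin n) :
    ∑ r, (if r = j then (1:ℂ) else 0) * f r = f j := by simp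

lemma triple (A : Fin n → Fin n → ℂ) (i k : Fin n) :
    ∑ r, ∑ s, A i r * A r s * A s k = A3 A i k := by
  simp only [A3, A2, Finset.mul_sum]
  exact Finset.sum_congr rfl fun r _ => Finset.sum_congr rfl fun s _ => by ring

lemma triple' (A : Fin n → Fin n → ℂ) (c : ℂ) (i k : Fin n) :
    ∑ r, ∑ s, c * (A i r * A r s * A s k) = c * A3 A i k := by
  rw [← triple A i k]
  simp [Finset.mul_sum]

lemma triple'' (A : Fin n → Fin n → ℂ) (c : ℂ) (i j : Fin n) :
    ∑ r, ∑ s, c * (A i s * A s r * A r j) = c * A3 A i j := by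
  rw [Finset.sum_comm]; exact triple' A c i j

lemma L1 (A : Fin n → Fin n → ℂ) (e : Fin n → ℂ) (i j k : Fin n) :
    (∑ r, ∑ s, Nab A e i r s * A r j * A s k)
      = gA A e j * A i k - gA A e k * A i j
        + A2 A i j * g2 A e k - A2 A i k * g2 A e j := by
  have h : ∀ r ∈ (univ : Finset (Fin n)), ∀ s ∈ (univ : Finset (Fin n)),
      Nab A e i r s * A r j * A s k
        = (g2 A e r * A r j) * ((if i = s then (1:ℂ) else 0) * A s k)
          - ((if i = r then (1:ℂ) else 0) * A r j) * (g2 A e s * A s k)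
          + (A i r * A r j) * (e s * A s k)
          - (e r * A r j) * (A i s * A s k) := by
    intro r _ s _; simp only [Nab, g2]; ring
  calc (∑ r, ∑ s, Nab A e i r s * A r j * A s k)
      = (∑ r, ∑ s, (g2 A e r * A r j) * ((if i = s then (1:ℂ) else 0) * A s k))
        - (∑ r, ∑ s, ((if i = r then (1:ℂ) else 0) * A r j) * (g2 A e s * A s k))
        + (∑ r, ∑ s, (A i r * A r j) * (e s * A s k))
        - (∑ r, ∑ s, (e r * A r j) * (A i s * A s k)) := by
        rw [Finset.sum_congr rfl fun r hr => Finset.sum_congr rfl (h r hr)]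
        simp only [Finset.sum_sub_distrib, Finset.sum_add_distrib]
    _ = (∑ r, g2 A e r * A r j) * (∑ s, (if i = s then (1:ℂ) else 0) * A s k)
        - (∑ r, (if i = r then (1:ℂ) else 0) * A r j) * (∑ s, g2 A e s * A s k)
        + (∑ r, A i r * A r j) * (∑ s, e s * A s k)
        - (∑ r, e r * A r j) * (∑ s, A i s * A s k) := by
        rw [factor, factor, factor, factor]
    _ = _ := by
        simp only [Finset.sum_ite_eq, Finset.mem_univ, if_true, one_mul,
          ite_mul, zero_mul]
        simp only [gA, g2, A2]
        ring

lemma L2 (A : Fin n → Fin n → ℂ) (e : Fin n → ℂ) (i j k : Fin n) :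
    (∑ r, ∑ s, Nab A e r j s * A i r * A s k)
      = g2 A e j * A2 A i k - gA A e k * A i j
        + A2 A i j * g2 A e k - e j * A3 A i k := by
  have h : ∀ r ∈ (univ : Finset (Fin n)), ∀ s ∈ (univ : Finset (Fin n)),
      Nab A e r j s * A i r * A s k
        = (if r = s then (1:ℂ) else 0) * (g2 A e j * (A i r * A s k))
          - ((if r = j then (1:ℂ) else 0) * A i r) * (g2 A e s * A s k)
          + (A i r * A r j) * (e s * A s k)
          - e j * (A i r * A r s * A s k) := by
    intro r _ s _; simp only [Nab, g2]; ring
  calc (∑ r, ∑ s, Nab A e r j s * A i r * A s k)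
      = (∑ r, ∑ s, (if r = s then (1:ℂ) else 0) * (g2 A e j * (A i r * A s k)))
        - (∑ r, ∑ s, ((if r = j then (1:ℂ) else 0) * A i r) * (g2 A e s * A s k))
        + (∑ r, ∑ s, (A i r * A r j) * (e s * A s k))
        - (∑ r, ∑ s, e j * (A i r * A r s * A s k)) := by
        rw [Finset.sum_congr rfl fun r hr => Finset.sum_congr rfl (h r hr)]
        simp only [Finset.sum_sub_distrib, Finset.sum_add_distrib]
    _ = (∑ r, g2 A e j * (A i r * A r k))
        - (∑ r, (if r = j then (1:ℂ) else 0) * A i r) * (∑ s, g2 A e s * A s k)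
        + (∑ r, A i r * A r j) * (∑ s, e s * A s k)
        - e j * A3 A i k := by
        rw [diag, factor, factor, triple']
    _ = _ := by
        rw [collapseIn (fun r => A i r), ← Finset.mul_sum]
        simp only [gA, g2, A2]
        ring

lemma L3 (A : Fin n → Fin n → ℂ) (e : Fin n → ℂ) (i j k : Fin n) :
    (∑ r, ∑ s, Nab A e r s k * A i r * A s j)
      = gA A e j * A i k - g2 A e k * A2 A i j
        + e k * A3 A i j - A2 A i k * g2 A e j := by
  have h : ∀ r ∈ (univ : Finset (Fin n)), ∀ s ∈ (univ : Finset (Fin n)),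
      Nab A e r s k * A i r * A s j
        = ((if r = k then (1:ℂ) else 0) * A i r) * (g2 A e s * A s j)
          - (if r = s then (1:ℂ) else 0) * (g2 A e k * (A i r * A s j))
          + e k * (A i r * A r s * A s j)
          - (A i r * A r k) * (e s * A s j) := by
    intro r _ s _; simp only [Nab, g2]; ring
  calc (∑ r, ∑ s, Nab A e r s k * A i r * A s j)
      = (∑ r, ∑ s, ((if r = k then (1:ℂ) else 0) * A i r) * (g2 A e s * A s j))
        - (∑ r, ∑ s, (if r = s then (1:ℂ) else 0) * (g2 A e k * (A i r * A s j)))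
        + (∑ r, ∑ s, e k * (A i r * A r s * A s j))
        - (∑ r, ∑ s, (A i r * A r k) * (e s * A s j)) := by
        rw [Finset.sum_congr rfl fun r hr => Finset.sum_congr rfl (h r hr)]
        simp only [Finset.sum_sub_distrib, Finset.sum_add_distrib]
    _ = (∑ r, (if r = k then (1:ℂ) else 0) * A i r) * (∑ s, g2 A e s * A s j)
        - (∑ r, g2 A e k * (A i r * A r j))
        + e k * A3 A i j
        - (∑ r, A i r * A r k) * (∑ s, e s * A s j) := by
        rw [diag, factor, factor, triple']
    _ = _ := by
        rw [collapseIn (fun r => A i r), ← Finset.mul_sum]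
        simp only [gA, g2, A2]
        ring

lemma L4 (A : Fin n → Fin n → ℂ) (e : Fin n → ℂ) (i j k : Fin n) :
    (∑ r, ∑ s, Nab A e r j k * A i s * A s r)
      = g2 A e j * A2 A i k - g2 A e k * A2 A i j
        + e k * A3 A i j - e j * A3 A i k := by
  have h : ∀ r ∈ (univ : Finset (Fin n)), ∀ s ∈ (univ : Finset (Fin n)),
      Nab A e r j k * A i s * A s r
        = (if r = k then (1:ℂ) else 0) * (g2 A e j * (A i s * A s r))
          - (if r = j then (1:ℂ) else 0) * (g2 A e k * (A i s * A s r))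
          + e k * (A i s * A s r * A r j)
          - e j * (A i s * A s r * A r k) := by
    intro r _ s _; simp only [Nab, g2]; ring
  calc (∑ r, ∑ s, Nab A e r j k * A i s * A s r)
      = (∑ r, ∑ s, (if r = k then (1:ℂ) else 0) * (g2 A e j * (A i s * A s r)))
        - (∑ r, ∑ s, (if r = j then (1:ℂ) else 0) * (g2 A e k * (A i s * A s r)))
        + (∑ r, ∑ s, e k * (A i s * A s r * A r j))
        - (∑ r, ∑ s, e j * (A i s * A s r * A r k)) := by
        rw [Finset.sum_congr rfl fun r hr => Finset.sum_congr rfl (h r hr)]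
        simp only [Finset.sum_sub_distrib, Finset.sum_add_distrib]
    _ = (∑ s, g2 A e j * (A i s * A s k))
        - (∑ s, g2 A e k * (A i s * A s j))
        + e k * A3 A i j
        - e j * A3 A i k := by
        rw [collapseOuter, collapseOuter, triple'', triple'']
    _ = _ := by
        rw [← Finset.mul_sum, ← Finset.mul_sum]
        simp only [g2, A2]

end HaantjesAux

namespace HaantjesAux

open HydroHaantjes

lemma NijNab (n : ℕ) (hn : 0 < n) (η α : Matrix (Fin n) (Fin n) ℂ)
    (u : Fin n → ℂ) (i j k : Fin n) :
    Nij n hn η α u i j k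
      = Nab (Amat n hn η α u) (fun r => η (lastIdx n hn) r) i j k := by
  set A := Amat n hn η α u with hA
  set e : Fin n → ℂ := fun r => η (lastIdx n hn) r with he
  have h3 : ∀ r : Fin n, DAmat n hn η j r k - DAmat n hn η k r j = 0 := by
    intro r; simp only [DAmat]; ring
  have h1 : ∀ (j k : Fin n), (∑ r, A r j * DAmat n hn η r i k)
      = (∑ r, e r * A r j) * (if i = k then 1 else 0) + A i j * e k := by
    intro j k
    calc (∑ r, A r j * DAmat n hn η r i k)
        = ∑ r, ((e r * A r j) * (if i = k then (1:ℂ) else 0)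
            + (if i = r then (1:ℂ) else 0) * (A r j * e k)) := by
          refine Finset.sum_congr rfl fun r _ => ?_
          simp only [DAmat, he]; ring
      _ = (∑ r, (e r * A r j) * (if i = k then (1:ℂ) else 0))
            + ∑ r, (if i = r then (1:ℂ) else 0) * (A r j * e k) := by
          rw [Finset.sum_add_distrib]
      _ = (∑ r, e r * A r j) * (if i = k then 1 else 0) + A i j * e k := by
          rw [← Finset.sum_mul]
          congr 1
          simp
  simp only [Nij, ← hA, h1, h3, mul_zero, Finset.sum_const_zero, sub_zero, Nab]
  ring

end HaantjesAux




/-- For the hydrodynamic system with `A^i_k(u) = η_{nj}u^j δ^i_k + u^i η_{nk} + α^{ir}η_{rk}`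
(`η`, `α` symmetric), the Haantjes tensor vanishes identically. -/
theorem haantjes_vanishes (n : ℕ) (hn : 0 < n)
    (η α : Matrix (Fin n) (Fin n) ℂ)
    (hη : ∀ i j, η i j = η j i) (hα : ∀ i j, α i j = α j i) :
    ∀ (u : Fin n → ℂ) (i j k : Fin n),
      HydroHaantjes.Haantjes n hn η α u i j k = 0 := by
  intro u i j k
  simp only [HydroHaantjes.Haantjes, HaantjesAux.NijNab]
  rw [HaantjesAux.L1, HaantjesAux.L2, HaantjesAux.L3, HaantjesAux.L4]
  ring
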